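/- Let 0 < r < 1 and let f : ℕ → ℝ satisfy lim_{n→∞} f(n) = 0. Then there exists an irrational real number α such that there exist infinitely many N ∈ ℕ with |{n ≤ N : r < |cos(nπα)|^n}| ≥ f(N)·N. -/

import Mathlib

open Filter Finset Real

namespace Stmt9Aux

/-- Exponent sequence, growing fast depending on `M` (rate of convergence of `f`)
and `C` (depending on `r`). -/
def aS (M : ℕ → ℕ) (C : ℕ) : ℕ → ℕ
  | 0 => 1
  | k + 1 =>
      (k + 1) * aS M C k + 2 +
        64 * C * (max (max (M (aS M C k)) (2 * 2 ^ aS M C k)) k) ^ 3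

/-- The scale at which we count. -/
def NS (M : ℕ → ℕ) (C : ℕ) (k : ℕ) : ℕ :=
  max (max (M (aS M C k)) (2 * 2 ^ aS M C k)) k

variable (M : ℕ → ℕ) (C : ℕ)

lemma aS_succ (k : ℕ) :
    aS M C (k + 1) = (k + 1) * aS M C k + 2 + 64 * C * NS M C k ^ 3 := rfl

lemma aS_step (k : ℕ) : aS M C k + 2 ≤ aS M C (k + 1) := by
  have h1 : aS M C k ≤ (k + 1) * aS M C k := Nat.le_mul_of_pos_left _ k.succ_pos
  rw [aS_succ]; omega

lemma aS_add (m i : ℕ) : aS M C m + i ≤ aS M C (m + i) := by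
  induction i with
  | zero => simp
  | succ i ih =>
      have h2 : m + (i + 1) = (m + i) + 1 := rfl
      rw [h2]
      have := aS_step M C (m + i)
      omega

lemma aS_mono {i j : ℕ} (h : i ≤ j) : aS M C i ≤ aS M C j := by
  have h2 := aS_add M C i (j - i)
  rw [Nat.add_sub_cancel' h] at h2
  omega

lemma lt_aS (k : ℕ) : k < aS M C k := by
  have h := aS_add M C 0 k
  rw [Nat.zero_add] at h
  have h0 : aS M C 0 = 1 := rfl
  omega

lemma summable_aux : Summable (fun i => ((1 : ℝ) / 2) ^ aS M C i) := by
  have hg : Summable (fun i : ℕ => ((1 : ℝ) / 2) ^ i) :=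
    summable_geometric_of_lt_one (by norm_num) (by norm_num)
  refine hg.of_nonneg_of_le (fun i => by positivity) (fun i => ?_)
  exact pow_le_pow_of_le_one (by norm_num) (by norm_num) (le_of_lt (lt_aS M C i))

/-- The irrational number. -/
noncomputable def alphaS : ℝ := ∑' i, ((1 : ℝ) / 2) ^ aS M C i

lemma tail_summable (k : ℕ) : Summable (fun i => ((1 : ℝ) / 2) ^ aS M C (i + k)) := by
  have h := (summable_nat_add_iff (f := fun i => ((1 : ℝ) / 2) ^ aS M C i) k).2
    (summable_aux M C)
  simpa using h

lemma tail_pos (k : ℕ) : 0 < ∑' i, ((1 : ℝ) / 2) ^ aS M C (i + k) :=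
  Summable.tsum_pos (tail_summable M C k) (fun i => by positivity) 0 (by positivity)

lemma tail_le (k : ℕ) :
    ∑' i, ((1 : ℝ) / 2) ^ aS M C (i + k) ≤ 2 * ((1 : ℝ) / 2) ^ aS M C k := by
  have h1 : ∀ i, ((1 : ℝ) / 2) ^ aS M C (i + k) ≤ ((1 : ℝ) / 2) ^ aS M C k * ((1 : ℝ) / 2) ^ i := by
    intro i
    rw [← pow_add]
    apply pow_le_pow_of_le_one (by norm_num) (by norm_num)
    have h2 := aS_add M C k i
    rw [Nat.add_comm k i] at h2
    exact h2
  calc ∑' i, ((1 : ℝ) / 2) ^ aS M C (i + k)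
      ≤ ∑' i, ((1 : ℝ) / 2) ^ aS M C k * ((1 : ℝ) / 2) ^ i :=
        Summable.tsum_le_tsum h1 (tail_summable M C k)
          ((summable_geometric_of_lt_one (by norm_num) (by norm_num)).mul_left _)
    _ = ((1 : ℝ) / 2) ^ aS M C k * (1 - 1 / 2)⁻¹ := by
        rw [tsum_mul_left, tsum_geometric_of_lt_one (by norm_num) (by norm_num)]
    _ = 2 * ((1 : ℝ) / 2) ^ aS M C k := by norm_num; ring

/-- Numerator of the `k`-th convergent. -/
def pS (k : ℕ) : ℕ := ∑ j ∈ range (k + 1), 2 ^ (aS M C k - aS M C j)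

lemma pS_eq (k : ℕ) :
    (pS M C k : ℝ) * ((1 : ℝ) / 2) ^ aS M C k
      = ∑ j ∈ range (k + 1), ((1 : ℝ) / 2) ^ aS M C j := by
  rw [pS]
  push_cast
  rw [Finset.sum_mul]
  apply Finset.sum_congr rfl
  intro j hj
  have hle : aS M C j ≤ aS M C k := aS_mono M C (by simp at hj; omega)
  have h2 : (2 : ℝ) ^ (aS M C k - aS M C j) * 2 ^ aS M C j = 2 ^ aS M C k := by
    rw [← pow_add]; congr 1; omega
  have hne : (2 : ℝ) ^ aS M C k ≠ 0 := by positivity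
  have hne' : (2 : ℝ) ^ aS M C j ≠ 0 := by positivity
  rw [div_pow, div_pow, one_pow]
  field_simp
  simp only [one_pow, mul_one]
  linarith [h2]

lemma alpha_split (k : ℕ) :
    alphaS M C = (pS M C k : ℝ) * ((1 : ℝ) / 2) ^ aS M C k
      + ∑' i, ((1 : ℝ) / 2) ^ aS M C (i + (k + 1)) := by
  rw [alphaS, ← Summable.sum_add_tsum_nat_add (k + 1) (summable_aux M C), pS_eq]

lemma liouville_alpha : Liouville (alphaS M C) := by
  intro n
  refine ⟨(pS M C n : ℤ), (2 : ℤ) ^ aS M C n, ?_, ?_, ?_⟩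
  · have h1 : 1 ≤ aS M C n := by have := lt_aS M C n; omega
    have h2 : (2 : ℤ) ^ 1 ≤ (2 : ℤ) ^ aS M C n := pow_le_pow_right₀ (by norm_num) h1
    calc (1 : ℤ) < 2 ^ 1 := by norm_num
      _ ≤ _ := h2
  · have hkey : (pS M C n : ℝ) / 2 ^ aS M C n
        = (pS M C n : ℝ) * ((1 : ℝ) / 2) ^ aS M C n := by
      rw [div_eq_mul_inv, one_div, inv_pow]
    push_cast
    rw [hkey]
    have htp := tail_pos M C (n + 1)
    have hsplit := alpha_split M C n
    intro hcontra
    rw [hcontra] at hsplit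
    linarith
  · have hkey : (pS M C n : ℝ) / 2 ^ aS M C n
        = (pS M C n : ℝ) * ((1 : ℝ) / 2) ^ aS M C n := by
      rw [div_eq_mul_inv, one_div, inv_pow]
    push_cast
    rw [hkey]
    have hsplit := alpha_split M C n
    have htp := tail_pos M C (n + 1)
    have htl := tail_le M C (n + 1)
    have habs : |alphaS M C - (pS M C n : ℝ) * ((1 : ℝ) / 2) ^ aS M C n|
        = ∑' i, ((1 : ℝ) / 2) ^ aS M C (i + (n + 1)) := by
      rw [hsplit, add_sub_cancel_left]
      exact abs_of_pos htp
    rw [habs]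
    have h1 : 1 ≤ aS M C n := by have := lt_aS M C n; omega
    have hAn : n * aS M C n + 3 ≤ aS M C (n + 1) := by
      have hs := aS_succ M C n
      have hmul : (n + 1) * aS M C n = n * aS M C n + aS M C n := by ring
      omega
    have hstep1 : (2 : ℝ) * ((1 : ℝ) / 2) ^ aS M C (n + 1)
        ≤ 2 * ((1 : ℝ) / 2) ^ (n * aS M C n + 3) := by
      have := pow_le_pow_of_le_one (show (0:ℝ) ≤ 1/2 by norm_num)
        (show (1:ℝ)/2 ≤ 1 by norm_num) hAn
      linarith
    have hstep2 : (2 : ℝ) * ((1 : ℝ) / 2) ^ (n * aS M C n + 3)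
        < ((1 : ℝ) / 2) ^ (n * aS M C n) := by
      rw [pow_add]
      have hp : (0 : ℝ) < ((1 : ℝ) / 2) ^ (n * aS M C n) := by positivity
      nlinarith
    have hfin : ((1 : ℝ) / 2) ^ (n * aS M C n) = 1 / ((2 : ℝ) ^ aS M C n) ^ n := by
      rw [div_pow, one_pow, ← pow_mul, mul_comm]
    linarith [htl, hstep1, hstep2, hfin.le, hfin.ge]

end Stmt9Aux

set_option maxHeartbeats 2000000 in
theorem stmt_9 (r : ℝ) (hr : 0 < r) (hr1 : r < 1) (f : ℕ → ℝ)
    (hf : Filter.Tendsto f Filter.atTop (nhds 0)) :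
    ∃ α : ℝ, Irrational α ∧
      {N : ℕ | 0 < N ∧ f N * N ≤
        ({n : ℕ | 0 < n ∧ n ≤ N ∧
            r < |Real.cos (n * Real.pi * α)| ^ n}.ncard : ℝ)}.Infinite := by
  classical
  have hr0 : (0 : ℝ) < 1 - r := by linarith
  -- choose thresholds for f
  have hf' : ∀ j : ℕ, ∃ m : ℕ, ∀ n ≥ m, |f n| < 1 / (2 * 2 ^ j) := by
    intro j
    have hε : (0 : ℝ) < 1 / (2 * 2 ^ j) := by positivity
    obtain ⟨m, hm⟩ := (Metric.tendsto_atTop.mp hf) _ hε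
    exact ⟨m, fun n hn => by simpa [Real.dist_eq] using hm n hn⟩
  choose M hM using hf'
  set C : ℕ := ⌈(1 - r)⁻¹⌉₊ + 1 with hCdef
  have hCr : (1 - r)⁻¹ ≤ (C : ℝ) := by
    calc (1 - r)⁻¹ ≤ (⌈(1 - r)⁻¹⌉₊ : ℝ) := Nat.le_ceil _
      _ ≤ (C : ℝ) := by exact_mod_cast Nat.le_succ _
  have hC1 : (1 : ℝ) ≤ (C : ℝ) * (1 - r) := by
    have := mul_le_mul_of_nonneg_right hCr hr0.le
    rwa [inv_mul_cancel₀ (ne_of_gt hr0)] at this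
  refine ⟨Stmt9Aux.alphaS M C, (Stmt9Aux.liouville_alpha M C).irrational, ?_⟩
  set α := Stmt9Aux.alphaS M C with hα
  -- every `NS M C k` belongs to the set
  have hmem : ∀ k : ℕ, Stmt9Aux.NS M C k ∈
      {N : ℕ | 0 < N ∧ f N * N ≤
        ({n : ℕ | 0 < n ∧ n ≤ N ∧
            r < |Real.cos (n * Real.pi * α)| ^ n}.ncard : ℝ)} := by
    intro k
    set j : ℕ := Stmt9Aux.aS M C k with hjdef
    set Nk : ℕ := Stmt9Aux.NS M C k with hNkdef
    set A' : ℕ := Stmt9Aux.aS M C (k + 1) with hA'def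
    set t : ℝ := ∑' i, ((1 : ℝ) / 2) ^ Stmt9Aux.aS M C (i + (k + 1)) with htdef
    have hNM : M j ≤ Nk := le_trans (le_max_left _ _) (le_max_left _ _)
    have hNq : 2 * 2 ^ j ≤ Nk := le_trans (le_max_right _ _) (le_max_left _ _)
    have hNk_k : k ≤ Nk := le_max_right _ _
    have hq1 : 1 ≤ 2 ^ j := Nat.one_le_two_pow
    have hN1 : 0 < Nk := lt_of_lt_of_le (by positivity) hNq
    have htpos : 0 < t := Stmt9Aux.tail_pos M C (k + 1)
    have htle : t ≤ 2 * ((1 : ℝ) / 2) ^ A' := Stmt9Aux.tail_le M C (k + 1)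
    have halpha : α = (Stmt9Aux.pS M C k : ℝ) * ((1 : ℝ) / 2) ^ j + t :=
      Stmt9Aux.alpha_split M C k
    -- key numeric inequality
    have hnat : 64 * C * Nk ^ 3 < 2 ^ (2 * A') := by
      have h1 : 64 * C * Nk ^ 3 ≤ A' := by
        rw [hA'def, Stmt9Aux.aS_succ, ← hNkdef]
        omega
      calc 64 * C * Nk ^ 3 ≤ A' := h1
        _ < 2 ^ A' := Nat.lt_two_pow_self
        _ ≤ 2 ^ (2 * A') := Nat.pow_le_pow_right (by norm_num) (by omega)
    have hreal : 64 * (Nk : ℝ) ^ 3 * ((1 : ℝ) / 2) ^ (2 * A') < 1 - r := by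
      have h2 : ((1 : ℝ) / 2) ^ (2 * A') = ((2 : ℝ) ^ (2 * A'))⁻¹ := by
        rw [div_pow, one_pow, one_div]
      rw [h2, mul_inv_lt_iff₀ (by positivity)]
      have hcast : (64 : ℝ) * C * Nk ^ 3 < (2 : ℝ) ^ (2 * A') := by
        have := hnat
        exact_mod_cast this
      have hC0 : (0 : ℝ) < C := by positivity
      nlinarith [pow_nonneg (Nat.cast_nonneg Nk : (0:ℝ) ≤ Nk) 3]
    -- membership of multiples of 2^j in the inner set
    have hsub : ∀ m ∈ Finset.Icc 1 (Nk / 2 ^ j), m * 2 ^ j ∈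
        {n : ℕ | 0 < n ∧ n ≤ Nk ∧ r < |Real.cos (n * Real.pi * α)| ^ n} := by
      intro m hm
      rw [Finset.mem_Icc] at hm
      obtain ⟨hm1, hm2⟩ := hm
      set n : ℕ := m * 2 ^ j with hndef
      have hn0 : 0 < n := by positivity
      have hnN : n ≤ Nk := by
        rw [hndef]
        exact (Nat.le_div_iff_mul_le (by positivity)).mp hm2
      refine ⟨hn0, hnN, ?_⟩
      -- rewrite the cosine
      have hq0 : (2 : ℝ) ^ j ≠ 0 := by positivity
      have hkey : (n : ℝ) * Real.pi * α
          = (n : ℝ) * Real.pi * t + ((m * Stmt9Aux.pS M C k : ℕ) : ℤ) * Real.pi := by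
        rw [halpha, hndef]
        push_cast
        field_simp
        rw [one_div, inv_pow, mul_add, mul_left_comm ((2 : ℝ) ^ j), mul_inv_cancel₀ hq0]
        ring
      have hcos : |Real.cos ((n : ℝ) * Real.pi * α)| = |Real.cos ((n : ℝ) * Real.pi * t)| := by
        rw [hkey, Real.cos_add_int_mul_pi, zpow_natCast, abs_mul, abs_pow, abs_neg, abs_one, one_pow, one_mul]
      rw [hcos]
      set x : ℝ := (n : ℝ) * Real.pi * t with hxdef
      have hx0 : 0 ≤ x := by
        have := Real.pi_pos
        positivity
      have hnNk : (n : ℝ) ≤ (Nk : ℝ) := by exact_mod_cast hnN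
      have hn1 : (1 : ℝ) ≤ (n : ℝ) := by exact_mod_cast hn0
      have hxle : x ≤ 8 * (Nk : ℝ) * ((1 : ℝ) / 2) ^ A' := by
        rw [hxdef]
        have hπ : Real.pi ≤ 4 := by linarith [Real.pi_le_four]
        have h1 : (n : ℝ) * Real.pi * t ≤ (Nk : ℝ) * 4 * (2 * ((1 : ℝ) / 2) ^ A') := by
          apply mul_le_mul
          · exact mul_le_mul hnNk hπ Real.pi_pos.le (Nat.cast_nonneg _)
          · exact htle
          · exact htpos.le
          · positivity
        linarith
      have hnx2 : (n : ℝ) * x ^ 2 < 2 * (1 - r) := by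
        have h1 : (n : ℝ) * x ^ 2 ≤ (Nk : ℝ) * (8 * (Nk : ℝ) * ((1 : ℝ) / 2) ^ A') ^ 2 := by
          apply mul_le_mul hnNk _ (by positivity) (Nat.cast_nonneg _)
          exact pow_le_pow_left₀ hx0 hxle 2
        have h2 : (Nk : ℝ) * (8 * (Nk : ℝ) * ((1 : ℝ) / 2) ^ A') ^ 2
            = 64 * (Nk : ℝ) ^ 3 * ((1 : ℝ) / 2) ^ (2 * A') := by
          rw [mul_pow, mul_pow, ← pow_mul]
          ring
        rw [h2] at h1
        linarith
      have hx2 : x ^ 2 < 2 := by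
        nlinarith
      have hcosb : 1 - x ^ 2 / 2 ≤ |Real.cos x| :=
        le_trans (Real.one_sub_sq_div_two_le_cos) (le_abs_self _)
      have h0b : (0 : ℝ) ≤ 1 - x ^ 2 / 2 := by linarith
      calc r < 1 - (n : ℝ) * (x ^ 2 / 2) := by linarith
        _ = 1 + (n : ℕ) * (-(x ^ 2 / 2)) := by push_cast; ring
        _ ≤ (1 + -(x ^ 2 / 2)) ^ (n : ℕ) := one_add_mul_le_pow (by linarith) n
        _ = (1 - x ^ 2 / 2) ^ n := by ring_nf
        _ ≤ |Real.cos x| ^ n := pow_le_pow_left₀ h0b hcosb n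
    -- counting
    set S : Set ℕ := {n : ℕ | 0 < n ∧ n ≤ Nk ∧ r < |Real.cos (n * Real.pi * α)| ^ n} with hSdef
    have hSfin : S.Finite := by
      apply (Set.finite_Icc 1 Nk).subset
      intro n hn
      exact ⟨hn.1, hn.2.1⟩
    have hinj : Function.Injective (fun m : ℕ => m * 2 ^ j) := fun a b h => by
      exact Nat.eq_of_mul_eq_mul_right (by positivity) h
    have hcard : Nk / 2 ^ j ≤ S.ncard := by
      have h1 : ((Finset.Icc 1 (Nk / 2 ^ j)).image (fun m => m * 2 ^ j)).card
          = Nk / 2 ^ j := by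
        rw [Finset.card_image_of_injective _ hinj, Nat.card_Icc]
        have hd : 2 ≤ Nk / 2 ^ j := (Nat.le_div_iff_mul_le (by positivity)).mpr (by omega)
        omega
      have h2 : (((Finset.Icc 1 (Nk / 2 ^ j)).image (fun m => m * 2 ^ j) : Finset ℕ) : Set ℕ)
          ⊆ S := by
        intro x hx
        simp only [Finset.coe_image, Set.mem_image, Finset.mem_coe] at hx
        obtain ⟨m, hm, rfl⟩ := hx
        exact hsub m hm
      calc Nk / 2 ^ j
          = (((Finset.Icc 1 (Nk / 2 ^ j)).image (fun m => m * 2 ^ j) : Finset ℕ) : Set ℕ).ncard := by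
            rw [Set.ncard_coe_finset, h1]
        _ ≤ S.ncard := Set.ncard_le_ncard h2 hSfin
    -- final chain of real inequalities
    have hdiv2 : 2 ≤ Nk / 2 ^ j := (Nat.le_div_iff_mul_le (by positivity)).mpr (by omega)
    have hNle : Nk ≤ 2 * (2 ^ j * (Nk / 2 ^ j)) := by
      have h1 := Nat.div_add_mod Nk (2 ^ j)
      have h2 := Nat.mod_lt Nk (show 0 < 2 ^ j by positivity)
      have h3 : 2 ^ j ≤ 2 ^ j * (Nk / 2 ^ j) :=
        Nat.le_mul_of_pos_right _ (by omega)
      omega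
    have hfN : |f Nk| < 1 / (2 * 2 ^ j) := hM j Nk hNM
    refine ⟨hN1, ?_⟩
    have hchain : f Nk * Nk ≤ ((Nk / 2 ^ j : ℕ) : ℝ) := by
      have h1 : f Nk * Nk ≤ |f Nk| * Nk :=
        mul_le_mul_of_nonneg_right (le_abs_self _) (Nat.cast_nonneg _)
      have h2 : |f Nk| * Nk ≤ (1 / (2 * 2 ^ j)) * Nk :=
        mul_le_mul_of_nonneg_right hfN.le (Nat.cast_nonneg _)
      have h3 : (1 / (2 * (2 : ℝ) ^ j)) * Nk ≤ ((Nk / 2 ^ j : ℕ) : ℝ) := by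
        rw [div_mul_eq_mul_div, one_mul, div_le_iff₀ (by positivity)]
        have h4 : (Nk : ℝ) ≤ 2 * ((2 : ℝ) ^ j * ((Nk / 2 ^ j : ℕ) : ℝ)) := by
          exact_mod_cast hNle
        linarith
      linarith
    calc f Nk * Nk ≤ ((Nk / 2 ^ j : ℕ) : ℝ) := hchain
      _ ≤ (S.ncard : ℝ) := by exact_mod_cast hcard
  -- conclude infiniteness
  apply Set.infinite_of_not_bddAbove
  intro hbdd
  obtain ⟨B, hB⟩ := hbdd
  have h1 := hmem (B + 1)
  have h2 : Stmt9Aux.NS M C (B + 1) ≤ B := hB h1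
  have h3 : B + 1 ≤ Stmt9Aux.NS M C (B + 1) := le_max_right _ _
  omega
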